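/- arXiv:2006.14915 — 2 statements merged into one kernel-verified Lean document; each statement's English description precedes it below -/
import Mathlib

section
/- Suppose ζ satisfies Properties P1–P4 and ζ({o}) > 0, and let ρ : (0,∞) → [0,∞) be the function such that ρ(λ) = lim_{s→∞} E[ζ(H_{λ,s})]/(λ s^d) for each λ > 0 (this limit exists). Then the function λ ↦ λ·ρ(λ) is strictly increasing on the interval (0, ζ({o})/(c₂·π_d)), where c₂ is the constant in P4 and π_d is the Lebesgue volume of the unit ball in ℝ^d. -/
open MeasureTheory ProbabilityTheory Filter Set Metric Bornology
open scoped Classical ENNReal NNReal symmDiff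

noncomputable section

/-- Points of `ℝ^d`. -/
abbrev Pt (d : ℕ) := EuclideanSpace ℝ (Fin d)

/-- The half-open cube `Q_s = [-s/2, s/2)^d`. -/
def cube (d : ℕ) (s : ℝ) : Set (Pt d) := {x | ∀ i, x i ∈ Set.Ico (-(s / 2)) (s / 2)}

/-- The uniform distribution on `Q_s`. -/
def unifCube (d : ℕ) (s : ℝ) : Measure (Pt d) :=
  (volume (cube d s))⁻¹ • volume.restrict (cube d s)

/-- `E[ζ(H_{λ,s})]`, where `H_{λ,s} = {Y_1, …, Y_N}` with `N` a Poisson random variable of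
mean `λ s^d` independent of an i.i.d. sequence `Y_1, Y_2, …` of uniform points of `Q_s`. -/
def poissonExp (d : ℕ) (zeta : Finset (Pt d) → ℝ) (lam s : ℝ) : ℝ :=
  ∑' k : ℕ, (Real.exp (-(lam * s ^ d)) * (lam * s ^ d) ^ k / (Nat.factorial k : ℝ)) *
    ∫ y : Fin k → Pt d, zeta (Finset.image y Finset.univ) ∂(Measure.pi fun _ => unifCube d s)

/-- `|∂_Z(Y)|`: the number of points of `Y` lying within Euclidean distance 1 of `Z`. -/
def bdry (d : ℕ) (Y Z : Finset (Pt d)) : ℕ :=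
  {y ∈ (Y : Set (Pt d)) | ∃ z ∈ Z, dist y z ≤ 1}.ncard

/-- The rescaled set `r⁻¹ 𝒳`. -/
def scaleSet (d : ℕ) (r : ℝ) (X : Finset (Pt d)) : Finset (Pt d) :=
  X.image fun x => r⁻¹ • x

/-- `ζ*(A) = sup {ζ(X) : X ⊆ A finite}`. -/
def zetaStar (d : ℕ) (zeta : Finset (Pt d) → ℝ) (A : Set (Pt d)) : ℝ :=
  sSup {t | ∃ X : Finset (Pt d), (X : Set (Pt d)) ⊆ A ∧ t = zeta X}

/-- Domination number of the geometric graph `G(X, r)`. -/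
def domNum (d : ℕ) (r : ℝ) (X : Finset (Pt d)) : ℕ :=
  sInf {n | ∃ A ⊆ X, A.card = n ∧ ∀ x ∈ X, ∃ a ∈ A, dist x a ≤ r}

/-- Independence number of the geometric graph `G(X, r)`. -/
def indepNum (d : ℕ) (r : ℝ) (X : Finset (Pt d)) : ℕ :=
  sSup {n | ∃ A ⊆ X, A.card = n ∧ ∀ x ∈ A, ∀ y ∈ A, x ≠ y → r < dist x y}

/-- Clique-covering number of the geometric graph `G(X, r)`. -/
def cliqueCoverNum (d : ℕ) (r : ℝ) (X : Finset (Pt d)) : ℕ :=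
  sInf {n | ∃ P : Finset (Finset (Pt d)), P.card = n ∧
    (∀ C ∈ P, C ⊆ X ∧ C.Nonempty ∧ ∀ x ∈ C, ∀ y ∈ C, x ≠ y → dist x y ≤ r) ∧
    ∀ x ∈ X, ∃! C, C ∈ P ∧ x ∈ C}

/-- Vertex cover number of the geometric graph `G(X, r)`. -/
def vcNum (d : ℕ) (r : ℝ) (X : Finset (Pt d)) : ℕ :=
  sInf {n | ∃ A ⊆ X, A.card = n ∧
    ∀ x ∈ X, ∀ y ∈ X, x ≠ y → dist x y ≤ r → x ∈ A ∨ y ∈ A}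

/-- Number of isolated vertices of the geometric graph `G(X, r)`. -/
def isolCount (d : ℕ) (r : ℝ) (X : Finset (Pt d)) : ℕ :=
  {x ∈ (X : Set (Pt d)) | ∀ y ∈ X, y ≠ x → r < dist x y}.ncard

/-- `κ(A)`: the minimal number of closed unit balls whose union contains `A`. -/
def covNum (d : ℕ) (A : Set (Pt d)) : ℕ :=
  sInf {n | ∃ C : Finset (Pt d), C.card = n ∧ A ⊆ ⋃ x ∈ C, Metric.closedBall x 1}

/-- `α*(A)`: the maximum cardinality of a finite subset of `A` with pairwise distances `> 1`. -/
def packNum (d : ℕ) (A : Set (Pt d)) : ℕ :=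
  sSup {n | ∃ X : Finset (Pt d), (X : Set (Pt d)) ⊆ A ∧ X.card = n ∧
    ∀ x ∈ X, ∀ y ∈ X, x ≠ y → 1 < dist x y}

/-- `γ*(A) = sup {γ(G(X,1)) : X ⊆ A finite}`. -/
def domStar (d : ℕ) (A : Set (Pt d)) : ℕ :=
  sSup {n | ∃ X : Finset (Pt d), (X : Set (Pt d)) ⊆ A ∧ domNum d 1 X = n}

/-- Minimum weight of a travelling salesman tour through `X`, for the weight function `w`
(a tour is a Hamiltonian cycle of the complete graph on `X`, and an edge `{x,y}` has
weight `w (x - y)`), with the convention that the value is `0` when `|X| ≤ 2`. -/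
def TSPw (d : ℕ) (w : Pt d → ℝ) (X : Finset (Pt d)) : ℝ :=
  if h : 3 ≤ X.card then
    haveI : NeZero X.card := ⟨by omega⟩
    sInf {t | ∃ g : Fin X.card → Pt d, Function.Injective g ∧ (∀ i, g i ∈ X) ∧
      t = ∑ i, w (g (i + 1) - g i)}
  else 0

/-- Maximum `H`-packing number of the geometric graph `G(X, r)`. -/
def hPackNum {V : Type} [Fintype V] (H : SimpleGraph V) (d : ℕ) (r : ℝ)
    (X : Finset (Pt d)) : ℕ :=
  sSup {m | ∃ φ : Fin m → V → Pt d,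
    (∀ i, Function.Injective (φ i)) ∧ (∀ i v, φ i v ∈ X) ∧
    (∀ i u v, H.Adj u v → dist (φ i u) (φ i v) ≤ r) ∧
    (∀ i j, i ≠ j → ∀ u v, φ i u ≠ φ j v)}




/- ### Auxiliary lemmas -/

lemma summableA (B : ℝ) : Summable (fun n : ℕ => (n:ℝ) * B^n / n.factorial) := by
  rw [← summable_nat_add_iff 1]
  have : (fun n : ℕ => ((n+1:ℕ):ℝ) * B^(n+1) / (n+1).factorial)
      = fun n : ℕ => B * (B^n / n.factorial) := by
    funext n
    have h : ((n+1).factorial : ℝ) = (n+1) * n.factorial := by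
      rw [Nat.factorial_succ]; push_cast; ring
    rw [h]
    have h2 : ((n:ℝ)+1) ≠ 0 := by positivity
    field_simp
    push_cast; ring
  rw [this]
  exact (Real.summable_pow_div_factorial B).mul_left B

lemma summableB (B : ℝ) : Summable (fun n : ℕ => (n:ℝ) * B^(n-1) / (n-1).factorial) := by
  rw [← summable_nat_add_iff 1]
  have : (fun n : ℕ => ((n+1:ℕ):ℝ) * B^(n+1-1) / (n+1-1).factorial)
      = fun n : ℕ => (n:ℝ) * B^n / n.factorial + B^n / n.factorial := by
    funext n; simp; ring
  rw [this]
  exact (summableA B).add (Real.summable_pow_div_factorial B)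

lemma summable_poisson (t : ℝ) :
    Summable (fun n : ℕ => Real.exp (-t) * t^n / n.factorial) := by
  have : (fun n : ℕ => Real.exp (-t) * t^n / n.factorial)
      = fun n : ℕ => Real.exp (-t) * (t^n / n.factorial) := by funext n; ring
  rw [this]
  exact (Real.summable_pow_div_factorial t).mul_left _

lemma summable_poisson_mean (t : ℝ) :
    Summable (fun n : ℕ => (n:ℝ) * (Real.exp (-t) * t^n / n.factorial)) := by
  have : (fun n : ℕ => (n:ℝ) * (Real.exp (-t) * t^n / n.factorial))
      = fun n : ℕ => Real.exp (-t) * ((n:ℝ) * t^n / n.factorial) := by funext n; ring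
  rw [this]; exact (summableA t).mul_left _

lemma tsum_poisson (t : ℝ) : ∑' n : ℕ, Real.exp (-t) * t^n / n.factorial = 1 := by
  have h : ∑' n : ℕ, t^n / n.factorial = Real.exp t := by
    rw [Real.exp_eq_exp_ℝ, NormedSpace.exp_eq_tsum_div]
  calc ∑' n : ℕ, Real.exp (-t) * t^n / n.factorial
      = ∑' n : ℕ, Real.exp (-t) * (t^n / n.factorial) := by
        congr 1; funext n; ring
    _ = Real.exp (-t) * ∑' n : ℕ, t^n / n.factorial := tsum_mul_left
    _ = 1 := by rw [h, ← Real.exp_add]; simp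

lemma tsum_poisson_mean (t : ℝ) :
    ∑' n : ℕ, (n:ℝ) * (Real.exp (-t) * t^n / n.factorial) = t := by
  rw [(summable_poisson_mean t).tsum_eq_zero_add]
  simp only [Nat.cast_zero, zero_mul, zero_add]
  have : (fun n : ℕ => ((n+1:ℕ):ℝ) * (Real.exp (-t) * t^(n+1) / (n+1).factorial))
      = fun n : ℕ => t * (Real.exp (-t) * t^n / n.factorial) := by
    funext n
    have h : ((n+1).factorial : ℝ) = (n+1) * n.factorial := by
      rw [Nat.factorial_succ]; push_cast; ring
    rw [h]
    have h2 : ((n:ℝ)+1) ≠ 0 := by positivity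
    have h3 : (n.factorial : ℝ) ≠ 0 := by positivity
    push_cast
    field_simp
    ring
  rw [this, tsum_mul_left, tsum_poisson]
  simp

section deriv
variable {I : ℕ → ℝ}

/-- Abstract series lemma: if `I` is nonnegative, linearly bounded, and has increments
bounded below, then the Poisson average has the corresponding gap. -/
lemma poisson_series_gap {C β z : ℝ} (hC0 : 0 ≤ C) (hβ : 0 ≤ β)
    (hI0 : ∀ n, 0 ≤ I n) (hIle : ∀ n : ℕ, I n ≤ n * C)
    (hkey : ∀ n : ℕ, I n + z - β * n ≤ I (n + 1))
    {μ μ' : ℝ} (hμ : 0 < μ) (hμμ' : μ < μ') :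
    (z - β * μ') * (μ' - μ) + (∑' n : ℕ, Real.exp (-μ) * μ^n / n.factorial * I n)
      ≤ ∑' n : ℕ, Real.exp (-μ') * μ'^n / n.factorial * I n := by
  set B := μ' + 1 with hB
  have hB0 : 0 < B := by linarith
  set U : Set ℝ := Set.Ioo 0 B with hU
  set g : ℕ → ℝ → ℝ := fun n t => Real.exp (-t) * t^n / n.factorial * I n with hg
  set g' : ℕ → ℝ → ℝ :=
    fun n t => Real.exp (-t) * ((n:ℝ) * t^(n-1) - t^n) / n.factorial * I n with hg'
  have hderiv : ∀ (n : ℕ) (t : ℝ), HasDerivAt (g n) (g' n t) t := by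
    intro n t
    have h1 : HasDerivAt (fun t : ℝ => Real.exp (-t)) (-Real.exp (-t)) t := by
      simpa using (hasDerivAt_neg t).exp
    have h4 := ((h1.mul (hasDerivAt_pow n t)).div_const (n.factorial : ℝ)).mul_const (I n)
    exact h4.congr_deriv (by ring)
  set u : ℕ → ℝ := fun n => (B^(n-1)/(n-1).factorial + B^n/n.factorial) * ((n:ℝ) * C) with hu
  have husum : Summable u := by
    have : u = fun n : ℕ => C * ((n:ℝ) * B^(n-1) / (n-1).factorial)
        + C * ((n:ℝ) * B^n / n.factorial) := by
      funext n; simp only [hu]; ring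
    rw [this]
    exact ((summableB B).mul_left C).add ((summableA B).mul_left C)
  have hIabs : ∀ n : ℕ, |I n| ≤ n * C := by
    intro n; rw [abs_of_nonneg (hI0 n)]; exact hIle n
  have hbound : ∀ (n : ℕ) (t : ℝ), t ∈ U → ‖g' n t‖ ≤ u n := by
    intro n t ht
    obtain ⟨ht0, htB⟩ := ht
    have hexp : Real.exp (-t) ≤ 1 := Real.exp_le_one_iff.2 (by linarith)
    have habs : |g' n t| ≤ ((n:ℝ) * t^(n-1) + t^n) / n.factorial * ((n:ℝ) * C) := by
      rw [hg']
      rw [abs_mul, abs_div, abs_mul, Nat.abs_cast, abs_of_nonneg (Real.exp_pos _).le]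
      have h1 : |(n:ℝ) * t^(n-1) - t^n| ≤ (n:ℝ) * t^(n-1) + t^n := by
        refine le_trans (abs_sub _ _) ?_
        rw [abs_mul, Nat.abs_cast, abs_pow, abs_of_nonneg ht0.le, abs_pow,
          abs_of_nonneg ht0.le]
      have hfac : (0:ℝ) < n.factorial := by positivity
      have hstep1 : Real.exp (-t) * |(n:ℝ) * t^(n-1) - t^n| ≤ (n:ℝ) * t^(n-1) + t^n := by
        calc Real.exp (-t) * |(n:ℝ) * t^(n-1) - t^n|
            ≤ 1 * ((n:ℝ) * t^(n-1) + t^n) :=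
              mul_le_mul hexp h1 (abs_nonneg _) zero_le_one
          _ = (n:ℝ) * t^(n-1) + t^n := one_mul _
      refine mul_le_mul ?_ (hIabs n) (abs_nonneg _) (by positivity)
      exact div_le_div_of_nonneg_right hstep1 hfac.le
    rw [Real.norm_eq_abs]
    match n with
    | 0 =>
      have hI00 : I 0 = 0 := le_antisymm (by simpa using hIle 0) (hI0 0)
      simp [hg', hI00, hu]
    | (m+1) =>
      simp only [hu, Nat.add_sub_cancel] at habs ⊢
      refine le_trans habs ?_
      have hfact : (((m+1).factorial : ℝ)) = ((m:ℝ)+1) * m.factorial := by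
        rw [Nat.factorial_succ]; push_cast; ring
      have h3 : (m.factorial:ℝ) ≠ 0 := by positivity
      have hL : (((m+1:ℕ)):ℝ) * t^m + t^(m+1) = ((m:ℝ)+1) * t^m + t^(m+1) := by push_cast; ring
      have heq : ((((m+1:ℕ)):ℝ) * t^m + t^(m+1)) / (((m+1).factorial:ℝ))
          = t^m/(m.factorial:ℝ) + t^(m+1)/(((m+1).factorial:ℝ)) := by
        rw [hL, hfact]
        have h2 : ((m:ℝ)+1) ≠ 0 := by positivity
        field_simp
      rw [heq]
      have hC' : (0:ℝ) ≤ (((m+1:ℕ)):ℝ) * C := by positivity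
      refine mul_le_mul_of_nonneg_right ?_ hC'
      gcongr <;> first | exact ht0.le | exact htB.le | positivity
  -- summability of the series itself
  have hsumg : ∀ t : ℝ, 0 ≤ t → Summable (fun n => g n t) := by
    intro t ht
    refine Summable.of_nonneg_of_le (fun n => ?_) (fun n => ?_) ((summableA t).mul_left C)
    · exact mul_nonneg (by positivity) (hI0 n)
    · simp only [hg]
      calc Real.exp (-t) * t^n / n.factorial * I n
          ≤ 1 * t^n / n.factorial * ((n:ℝ)*C) := by
            refine mul_le_mul ?_ (hIle n) (hI0 n) (by positivity)
            refine div_le_div_of_nonneg_right ?_ (by positivity)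
            exact mul_le_mul_of_nonneg_right (Real.exp_le_one_iff.2 (by linarith))
              (pow_nonneg ht n)
        _ = C * ((n:ℝ) * t^n / n.factorial) := by ring
  have hsumgI1 : ∀ t : ℝ, 0 ≤ t →
      Summable (fun n : ℕ => Real.exp (-t) * t^n / n.factorial * I (n+1)) := by
    intro t ht
    refine Summable.of_nonneg_of_le (fun n => mul_nonneg (by positivity) (hI0 _)) (fun n => ?_)
      (((summableA t).mul_left C).add ((Real.summable_pow_div_factorial t).mul_left C))
    calc Real.exp (-t) * t^n / n.factorial * I (n+1)
        ≤ 1 * t^n / n.factorial * (((n:ℝ)+1)*C) := by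
          refine mul_le_mul ?_ ?_ (hI0 _) (by positivity)
          · exact div_le_div_of_nonneg_right
              (mul_le_mul_of_nonneg_right (Real.exp_le_one_iff.2 (by linarith))
                (pow_nonneg ht n)) (by positivity)
          · have h := hIle (n+1); push_cast at h ⊢; linarith
      _ = C * ((n:ℝ) * t^n / n.factorial) + C * (t^n / n.factorial) := by ring
  -- lower bound for the derivative on (μ, μ')
  have hderivsum : ∀ t : ℝ, t ∈ Set.Ioo μ μ' → (z - β * μ') ≤ ∑' n : ℕ, g' n t := by
    intro t ht
    obtain ⟨htμ, htμ'⟩ := ht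
    have ht0 : 0 < t := lt_trans hμ htμ
    set a : ℕ → ℝ := fun n => Real.exp (-t) * ((n:ℝ) * t^(n-1)) / n.factorial * I n with ha
    have haeq : ∀ m : ℕ, a (m+1) = Real.exp (-t) * t^m / m.factorial * I (m+1) := by
      intro m
      simp only [ha, Nat.add_sub_cancel]
      have hfact : (((m+1).factorial : ℝ)) = ((m:ℝ)+1) * m.factorial := by
        rw [Nat.factorial_succ]; push_cast; ring
      have h2 : ((m:ℝ)+1) ≠ 0 := by positivity
      have h3 : (m.factorial:ℝ) ≠ 0 := by positivity
      rw [hfact]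
      push_cast
      field_simp
    have hsA : Summable a := by
      rw [← summable_nat_add_iff 1]
      have : (fun m : ℕ => a (m+1))
          = fun m : ℕ => Real.exp (-t) * t^m / m.factorial * I (m+1) := funext haeq
      rw [this]
      exact hsumgI1 t ht0.le
    have hsB : Summable (fun n : ℕ => Real.exp (-t) * t^n / n.factorial * I n) := hsumg t ht0.le
    have hsplit : ∀ n, g' n t = a n - Real.exp (-t) * t^n / n.factorial * I n := by
      intro n; simp only [hg', ha]; ring
    have htsum : ∑' n, g' n t
        = (∑' n, a n) - ∑' n : ℕ, Real.exp (-t) * t^n / n.factorial * I n := by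
      rw [tsum_congr hsplit]
      exact hsA.tsum_sub hsB
    have hA : ∑' n, a n = ∑' n : ℕ, Real.exp (-t) * t^n / n.factorial * I (n+1) := by
      rw [hsA.tsum_eq_zero_add]
      have ha0 : a 0 = 0 := by simp [ha]
      rw [ha0, zero_add]
      exact tsum_congr haeq
    rw [htsum, hA, ← (hsumgI1 t ht0.le).tsum_sub hsB]
    have hterm : ∀ n : ℕ, (Real.exp (-t) * t^n / n.factorial) * (z - β * n)
        ≤ Real.exp (-t) * t^n / n.factorial * I (n+1)
          - Real.exp (-t) * t^n / n.factorial * I n := by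
      intro n
      have hk := hkey n
      have hp : (0:ℝ) ≤ Real.exp (-t) * t^n / n.factorial := by positivity
      have h2 := mul_le_mul_of_nonneg_left (show z - β*n ≤ I (n+1) - I n by linarith) hp
      nlinarith [h2]
    have hLsum : Summable (fun n : ℕ => (Real.exp (-t) * t^n / n.factorial) * (z - β * n)) := by
      have h1 : (fun n : ℕ => (Real.exp (-t) * t^n / n.factorial) * (z - β * n))
          = fun n : ℕ => z * (Real.exp (-t) * t^n / n.factorial)
            - β * ((n:ℝ) * (Real.exp (-t) * t^n / n.factorial)) := by funext n; ring
      rw [h1]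
      exact ((summable_poisson t).mul_left z).sub ((summable_poisson_mean t).mul_left β)
    have hRsum : Summable (fun n : ℕ => Real.exp (-t) * t^n / n.factorial * I (n+1)
        - Real.exp (-t) * t^n / n.factorial * I n) := (hsumgI1 t ht0.le).sub hsB
    have hle := Summable.tsum_le_tsum hterm hLsum hRsum
    refine le_trans ?_ hle
    have hval : ∑' n : ℕ, (Real.exp (-t) * t^n / n.factorial) * (z - β * n) = z - β * t := by
      have h1 : (fun n : ℕ => (Real.exp (-t) * t^n / n.factorial) * (z - β * n))
          = fun n : ℕ => z * (Real.exp (-t) * t^n / n.factorial)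
            - β * ((n:ℝ) * (Real.exp (-t) * t^n / n.factorial)) := by funext n; ring
      rw [h1, ((summable_poisson t).mul_left z).tsum_sub ((summable_poisson_mean t).mul_left β),
        tsum_mul_left, tsum_mul_left, tsum_poisson, tsum_poisson_mean]
      ring
    rw [hval]
    have hβt : β * t ≤ β * μ' := mul_le_mul_of_nonneg_left htμ'.le hβ
    linarith
  -- differentiability of the sum
  have hμU : μ ∈ U := ⟨hμ, by simp only [hB]; linarith⟩
  have hsub : Set.Icc μ μ' ⊆ U := fun t ht =>
    ⟨lt_of_lt_of_le hμ ht.1, lt_of_le_of_lt ht.2 (by simp only [hB]; linarith)⟩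
  have hFd : ∀ t ∈ U, HasDerivAt (fun y => ∑' n, g n y) (∑' n, g' n t) t := by
    intro t ht
    exact hasDerivAt_tsum_of_isPreconnected husum isOpen_Ioo (convex_Ioo 0 B).isPreconnected
      (fun n y _ => hderiv n y) hbound hμU (hsumg μ hμ.le) ht
  have hmvt := Convex.mul_sub_le_image_sub_of_le_deriv (convex_Icc μ μ')
    (f := fun y => ∑' n, g n y)
    (fun t ht => (hFd t (hsub ht)).continuousAt.continuousWithinAt)
    (fun t ht => by
      rw [interior_Icc] at ht
      exact ((hFd t (hsub (Set.Ioo_subset_Icc_self ht))).differentiableAt.differentiableWithinAt))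
    (C := z - β * μ')
    (fun t ht => by
      rw [interior_Icc] at ht
      rw [(hFd t (hsub (Set.Ioo_subset_Icc_self ht))).deriv]
      exact hderivsum t ht)
    μ (Set.left_mem_Icc.2 hμμ'.le) μ' (Set.right_mem_Icc.2 hμμ'.le) hμμ'.le
  simp only [hg] at hmvt
  linarith
end deriv

lemma volume_cube (d : ℕ) {s : ℝ} (hs : 0 < s) :
    volume (cube d s) = ENNReal.ofReal (s^d) := by
  have h : cube d s = (MeasurableEquiv.toLp 2 (Fin d → ℝ)).symm ⁻¹'
      (Set.univ.pi fun _ : Fin d => Set.Ico (-(s/2)) (s/2)) := by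
    ext x; simp [cube, Set.mem_pi, MeasurableEquiv.toLp]; rfl
  rw [h, (EuclideanSpace.volume_preserving_symm_measurableEquiv_toLp (Fin d)).measure_preimage
    (MeasurableSet.univ_pi fun _ => measurableSet_Ico).nullMeasurableSet]
  rw [volume_pi_pi]
  simp [Real.volume_Ico, ← ENNReal.ofReal_pow hs.le]

lemma unifCube_prob (d : ℕ) {s : ℝ} (hs : 0 < s) :
    IsProbabilityMeasure (unifCube d s) := by
  constructor
  rw [unifCube, Measure.smul_apply, Measure.restrict_apply_univ, volume_cube d hs,
    smul_eq_mul, ENNReal.inv_mul_cancel]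
  · exact (ENNReal.ofReal_pos.2 (pow_pos hs d)).ne'
  · exact ENNReal.ofReal_ne_top

lemma unifCube_ball (d : ℕ) {s : ℝ} (hs : 0 < s) (z : Pt d) :
    (unifCube d s (Metric.closedBall z 1)).toReal
      ≤ (volume (Metric.closedBall (0 : Pt d) 1)).toReal / s^d := by
  have hb : volume (Metric.closedBall z 1) = volume (Metric.closedBall (0 : Pt d) 1) :=
    Measure.addHaar_closedBall_center volume z 1
  have h1 : unifCube d s (Metric.closedBall z 1)
      ≤ (ENNReal.ofReal (s^d))⁻¹ * volume (Metric.closedBall (0 : Pt d) 1) := by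
    rw [unifCube, Measure.smul_apply, smul_eq_mul, volume_cube d hs]
    refine mul_le_mul_right ?_ _
    rw [← hb]
    exact le_trans (Measure.restrict_apply_le _ _) le_rfl
  calc (unifCube d s (Metric.closedBall z 1)).toReal
      ≤ ((ENNReal.ofReal (s^d))⁻¹ * volume (Metric.closedBall (0 : Pt d) 1)).toReal := by
        apply ENNReal.toReal_mono _ h1
        exact ENNReal.mul_ne_top (ENNReal.inv_ne_top.2 (ENNReal.ofReal_pos.2 (pow_pos hs d)).ne')
          measure_closedBall_lt_top.ne
    _ = (volume (Metric.closedBall (0 : Pt d) 1)).toReal / s^d := by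
        rw [ENNReal.toReal_mul, ENNReal.toReal_inv, ENNReal.toReal_ofReal (by positivity)]
        ring


section core
variable {d : ℕ} (zeta : Finset (Pt d) → ℝ)

lemma zeta_sing (hP2 : ∀ (X : Finset (Pt d)) (x : Pt d), zeta (X.image fun y => x + y) = zeta X)
    (x : Pt d) : zeta {x} = zeta {0} := by
  have h := hP2 {0} x
  simpa using h

lemma zeta_growth (hzeta0 : zeta ∅ = 0)
    (hP2 : ∀ (X : Finset (Pt d)) (x : Pt d), zeta (X.image fun y => x + y) = zeta X)
    {c1 : ℝ} (hP3 : ∀ Y Z : Finset (Pt d), Disjoint Y Z → zeta (Y ∪ Z) ≤ zeta Y + zeta Z + c1) :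
    ∀ X : Finset (Pt d), zeta X ≤ X.card * (zeta {0} + c1) := by
  intro X
  induction X using Finset.induction_on with
  | empty => simp [hzeta0]
  | insert _ _ ha ih =>
    rename_i a X
    have hd : Disjoint {a} X := Finset.disjoint_singleton_left.2 ha
    have h := hP3 {a} X hd
    rw [← Finset.insert_eq] at h
    rw [Finset.card_insert_of_notMem ha]
    push_cast
    rw [zeta_sing zeta hP2 a] at h
    linarith

lemma key_integral (hd : 1 ≤ d) (hzeta0 : zeta ∅ = 0) (hzetann : ∀ X, 0 ≤ zeta X)
    (hP1 : ∀ k : ℕ, Measurable fun y : Fin k → Pt d => zeta (Finset.image y Finset.univ))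
    (hP2 : ∀ (X : Finset (Pt d)) (x : Pt d), zeta (X.image fun y => x + y) = zeta X)
    {c1 c2 : ℝ} (hc1 : 0 ≤ c1) (hc2 : 0 ≤ c2)
    (hP3 : ∀ Y Z : Finset (Pt d), Disjoint Y Z → zeta (Y ∪ Z) ≤ zeta Y + zeta Z + c1)
    (hP4 : ∀ Y Z : Finset (Pt d), Disjoint Y Z →
      zeta Y + zeta Z - c2 * (bdry d Y Z : ℝ) ≤ zeta (Y ∪ Z))
    {s : ℝ} (hs : 0 < s) (k : ℕ) :
    (∫ y : Fin k → Pt d, zeta (Finset.image y Finset.univ)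
        ∂(Measure.pi fun _ => unifCube d s))
      + zeta {0} - c2 * k * ((volume (Metric.closedBall (0:Pt d) 1)).toReal / s^d)
    ≤ ∫ y : Fin (k+1) → Pt d, zeta (Finset.image y Finset.univ)
        ∂(Measure.pi fun _ => unifCube d s) := by
  haveI : IsProbabilityMeasure (unifCube d s) := unifCube_prob d hs
  set ν := unifCube d s with hν
  set b := (volume (Metric.closedBall (0:Pt d) 1)).toReal with hbdef
  have hb0 : 0 ≤ b := ENNReal.toReal_nonneg
  set C := zeta {0} + c1 with hC
  have hC0 : 0 ≤ C := add_nonneg (hzetann _) hc1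
  have hgrow := zeta_growth zeta hzeta0 hP2 hP3
  -- integrability over m-fold products
  have hint : ∀ m : ℕ, Integrable (fun y : Fin m → Pt d => zeta (Finset.image y Finset.univ))
      (Measure.pi fun _ : Fin m => ν) := by
    intro m
    refine Integrable.mono' (integrable_const ((m : ℝ) * C)) (hP1 m).aestronglyMeasurable ?_
    filter_upwards with y
    rw [Real.norm_eq_abs, abs_of_nonneg (hzetann _)]
    refine le_trans (hgrow _) (mul_le_mul_of_nonneg_right ?_ hC0)
    exact_mod_cast le_trans Finset.card_image_le (by simp)
  -- the equivalence with the product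
  set e := MeasurableEquiv.piFinSuccAbove (fun _ : Fin (k+1) => Pt d) 0 with he
  have mp : MeasurePreserving e.symm
      (ν.prod (Measure.pi fun _ : Fin k => ν)) (Measure.pi fun _ : Fin (k+1) => ν) :=
    (measurePreserving_piFinSuccAbove (fun _ : Fin (k+1) => ν) 0).symm e
  have he_symm : ∀ (x : Pt d) (y : Fin k → Pt d), e.symm (x, y) = Fin.cons x y := by
    intro x y
    show (Fin.insertNthEquiv (fun _ => Pt d) 0).symm.symm (x, y) = _
    simp [Fin.insertNthEquiv, Fin.insertNth_zero']
  have himg : ∀ (x : Pt d) (y : Fin k → Pt d),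
      Finset.image (Fin.cons x y : Fin (k+1) → Pt d) Finset.univ
        = insert x (Finset.image y Finset.univ) := by
    intro x y
    ext z
    simp only [Finset.mem_image, Finset.mem_insert, Finset.mem_univ, true_and]
    constructor
    · rintro ⟨i, rfl⟩
      induction i using Fin.cases with
      | zero => left; simp
      | succ j => right; exact ⟨j, by simp⟩
    · rintro (rfl | ⟨j, rfl⟩)
      · exact ⟨0, by simp⟩
      · exact ⟨j.succ, by simp⟩
  -- measurability of x ↦ cons x y etc.
  have hmcons : Measurable fun p : Pt d × (Fin k → Pt d) =>
      zeta (Finset.image (Fin.cons p.1 p.2 : Fin (k+1) → Pt d) Finset.univ) := by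
    have h1 : (fun p : Pt d × (Fin k → Pt d) =>
        zeta (Finset.image (Fin.cons p.1 p.2 : Fin (k+1) → Pt d) Finset.univ))
        = (fun v : Fin (k+1) → Pt d => zeta (Finset.image v Finset.univ)) ∘ e.symm := by
      funext p
      simp [Function.comp, he_symm p.1 p.2]
    rw [h1]
    exact (hP1 (k+1)).comp e.symm.measurable
  -- nontriviality / null singletons
  haveI : Nonempty (Fin d) := ⟨⟨0, hd⟩⟩
  haveI : Nontrivial (Pt d) := inferInstance
  have hnullY : ∀ Y : Finset (Pt d), ν (Y : Set (Pt d)) = 0 := by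
    intro Y
    have h0 : (volume : Measure (Pt d)) (Y : Set (Pt d)) = 0 :=
      Set.Finite.measure_zero (Finset.finite_toSet Y) _
    have hle : ν (Y : Set (Pt d)) ≤ (volume (cube d s))⁻¹ * volume (Y : Set (Pt d)) := by
      rw [hν, unifCube, Measure.smul_apply, smul_eq_mul]
      exact mul_le_mul_right (Measure.restrict_apply_le _ _) _
    rw [h0, mul_zero] at hle
    exact le_antisymm hle (by simp)
  -- the inner pointwise bound
  have inner : ∀ y : Fin k → Pt d,
      zeta (Finset.image y Finset.univ) + zeta {0} - c2 * k * (b / s^d)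
        ≤ ∫ x, zeta (Finset.image (Fin.cons x y : Fin (k+1) → Pt d) Finset.univ) ∂ν := by
    intro y
    set Y := Finset.image y Finset.univ with hY
    have hmx : Measurable fun x : Pt d =>
        zeta (Finset.image (Fin.cons x y : Fin (k+1) → Pt d) Finset.univ) :=
      hmcons.comp (measurable_id.prodMk measurable_const)
    have hintx : Integrable (fun x : Pt d =>
        zeta (Finset.image (Fin.cons x y : Fin (k+1) → Pt d) Finset.univ)) ν := by
      refine Integrable.mono' (integrable_const (((k:ℝ)+1) * C)) hmx.aestronglyMeasurable ?_
      filter_upwards with x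
      rw [Real.norm_eq_abs, abs_of_nonneg (hzetann _)]
      refine le_trans (hgrow _) (mul_le_mul_of_nonneg_right ?_ hC0)
      have := Finset.card_image_le (f := (Fin.cons x y : Fin (k+1) → Pt d)) (s := Finset.univ)
      have h2 : (Finset.univ : Finset (Fin (k+1))).card = k + 1 := by simp
      rw [h2] at this
      exact_mod_cast this
    -- counting function
    set N : Pt d → ℝ := fun x => ∑ i : Fin k, if dist (y i) x ≤ 1 then (1:ℝ) else 0 with hNdef
    have hNind : ∀ i : Fin k, (fun x : Pt d => if dist (y i) x ≤ 1 then (1:ℝ) else 0)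
        = (Metric.closedBall (y i) 1).indicator (fun _ => (1:ℝ)) := by
      intro i
      funext x
      rw [Set.indicator_apply]
      congr 1
      simp [Metric.mem_closedBall, dist_comm]
    have hNint : Integrable N ν := by
      refine integrable_finset_sum _ fun i _ => ?_
      rw [hNind i]
      exact (integrable_const (1:ℝ)).indicator measurableSet_closedBall
    have hNval : ∫ x, N x ∂ν ≤ (k:ℝ) * (b / s^d) := by
      rw [hNdef, integral_finset_sum _ fun i _ => by
        rw [hNind i]; exact (integrable_const (1:ℝ)).indicator measurableSet_closedBall]
      have : ∀ i : Fin k, ∫ x, (if dist (y i) x ≤ 1 then (1:ℝ) else 0) ∂ν ≤ b / s^d := by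
        intro i
        rw [hNind i, integral_indicator_const _ measurableSet_closedBall]
        simpa [measureReal_def] using unifCube_ball d hs (y i)
      calc ∑ i : Fin k, ∫ x, (if dist (y i) x ≤ 1 then (1:ℝ) else 0) ∂ν
          ≤ ∑ _i : Fin k, b / s^d := Finset.sum_le_sum fun i _ => this i
        _ = (k:ℝ) * (b / s^d) := by simp [mul_comm]
    -- a.e. pointwise bound
    have hae : ∀ᵐ x ∂ν, zeta Y + zeta {0} - c2 * N x
        ≤ zeta (Finset.image (Fin.cons x y : Fin (k+1) → Pt d) Finset.univ) := by
      have hzero : ∀ᵐ x ∂ν, x ∉ (Y : Set (Pt d)) := by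
        rw [ae_iff]
        simpa using hnullY Y
      filter_upwards [hzero] with x hx
      have hdisj : Disjoint Y ({x} : Finset (Pt d)) :=
        Finset.disjoint_singleton_right.2 (by simpa using hx)
      have h4 := hP4 Y {x} hdisj
      rw [zeta_sing zeta hP2 x] at h4
      have himg2 : Finset.image (Fin.cons x y : Fin (k+1) → Pt d) Finset.univ = Y ∪ {x} := by
        rw [himg x y, ← hY]
        rw [Finset.union_comm, ← Finset.insert_eq]
      rw [himg2]
      -- boundary bound
      have hset : {p ∈ (Y : Set (Pt d)) | ∃ z ∈ ({x} : Finset (Pt d)), dist p z ≤ 1}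
          = ((Y.filter fun p => dist p x ≤ 1) : Finset (Pt d)) := by
        ext p
        simp [Finset.mem_filter, Set.mem_setOf_eq]
      have h5 : (bdry d Y {x} : ℝ) ≤ N x := by
        rw [bdry, hset, Set.ncard_coe_finset]
        have h6 : (Y.filter fun p => dist p x ≤ 1).card
            ≤ (Finset.univ.filter fun i : Fin k => dist (y i) x ≤ 1).card := by
          refine le_trans (Finset.card_le_card ?_) (Finset.card_image_le (f := y))
          intro p hp
          rw [Finset.mem_filter] at hp
          obtain ⟨hpY, hpd⟩ := hp
          rw [hY, Finset.mem_image] at hpY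
          obtain ⟨i, _, rfl⟩ := hpY
          exact Finset.mem_image_of_mem y (Finset.mem_filter.2 ⟨Finset.mem_univ i, hpd⟩)
        have h7 : ((Finset.univ.filter fun i : Fin k => dist (y i) x ≤ 1).card : ℝ) = N x := by
          rw [hNdef, Finset.card_filter]
          push_cast
          rfl
        rw [← h7]
        exact_mod_cast h6
      nlinarith [mul_le_mul_of_nonneg_left h5 hc2]
    -- integrate
    have hIle := integral_mono_ae (f := fun x => zeta Y + zeta {0} - c2 * N x)
      ((integrable_const (zeta Y + zeta {0})).sub (hNint.const_mul c2)) hintx hae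
    rw [integral_sub (integrable_const _) (hNint.const_mul c2), integral_const,
      integral_const_mul] at hIle
    simp only [measure_univ, probReal_univ, ENNReal.toReal_one, one_smul] at hIle
    have : c2 * ∫ x, N x ∂ν ≤ c2 * ((k:ℝ) * (b / s^d)) := mul_le_mul_of_nonneg_left hNval hc2
    have hre : zeta Y + zeta {0} - c2 * (k:ℝ) * (b / s^d)
        ≤ zeta Y + zeta {0} - c2 * ∫ x, N x ∂ν := by linarith
    exact le_trans hre hIle
  -- now put it together via Fubini
  have hintprod : Integrable (fun p : Pt d × (Fin k → Pt d) =>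
      zeta (Finset.image (Fin.cons p.1 p.2 : Fin (k+1) → Pt d) Finset.univ))
      (ν.prod (Measure.pi fun _ : Fin k => ν)) := by
    refine Integrable.mono' (integrable_const (((k:ℝ)+1) * C)) hmcons.aestronglyMeasurable ?_
    filter_upwards with p
    rw [Real.norm_eq_abs, abs_of_nonneg (hzetann _)]
    refine le_trans (hgrow _) (mul_le_mul_of_nonneg_right ?_ hC0)
    have := Finset.card_image_le (f := (Fin.cons p.1 p.2 : Fin (k+1) → Pt d)) (s := Finset.univ)
    have h2 : (Finset.univ : Finset (Fin (k+1))).card = k + 1 := by simp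
    rw [h2] at this
    exact_mod_cast this
  have hIk1 : ∫ y : Fin (k+1) → Pt d, zeta (Finset.image y Finset.univ)
      ∂(Measure.pi fun _ => ν)
      = ∫ p : Pt d × (Fin k → Pt d),
          zeta (Finset.image (Fin.cons p.1 p.2 : Fin (k+1) → Pt d) Finset.univ)
          ∂(ν.prod (Measure.pi fun _ : Fin k => ν)) := by
    rw [← mp.integral_comp e.symm.measurableEmbedding]
    congr 1
    funext p
    rw [he_symm p.1 p.2]
  have hswap : ∫ p : Pt d × (Fin k → Pt d),
      zeta (Finset.image (Fin.cons p.1 p.2 : Fin (k+1) → Pt d) Finset.univ)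
      ∂(ν.prod (Measure.pi fun _ : Fin k => ν))
      = ∫ y : Fin k → Pt d, (∫ x : Pt d,
          zeta (Finset.image (Fin.cons x y : Fin (k+1) → Pt d) Finset.univ) ∂ν)
          ∂(Measure.pi fun _ : Fin k => ν) := by
    rw [integral_prod _ hintprod]
    exact integral_integral_swap hintprod
  rw [hIk1, hswap]
  have hrhsint : Integrable (fun y : Fin k → Pt d => ∫ x : Pt d,
      zeta (Finset.image (Fin.cons x y : Fin (k+1) → Pt d) Finset.univ) ∂ν)
      (Measure.pi fun _ : Fin k => ν) := hintprod.integral_prod_right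
  have hmono := integral_mono
    (f := fun y : Fin k → Pt d => zeta (Finset.image y Finset.univ)
      + (zeta {0} - c2 * k * (b / s^d)))
    (g := fun y : Fin k → Pt d => ∫ x : Pt d,
      zeta (Finset.image (Fin.cons x y : Fin (k+1) → Pt d) Finset.univ) ∂ν)
    ((hint k).add (integrable_const _)) hrhsint (fun y => by
      have := inner y
      simp only []
      linarith)
  rw [integral_add (hint k) (integrable_const _), integral_const] at hmono
  simp only [measure_univ, probReal_univ, ENNReal.toReal_one, one_smul] at hmono
  linarith
end core

/-- if `ζ({o}) > 0` then `λ ↦ λ·ρ(λ)` is strictly increasing on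
`(0, ζ({o})/(c₂ π_d))`, where `π_d` is the volume of the unit ball. -/
theorem lambda_rho_strict_mono {d : ℕ} (hd : 1 ≤ d)
    (zeta : Finset (Pt d) → ℝ) (hzeta0 : zeta ∅ = 0) (hzetann : ∀ X, 0 ≤ zeta X)
    -- P1 (measurability)
    (hP1 : ∀ k : ℕ, Measurable fun y : Fin k → Pt d => zeta (Finset.image y Finset.univ))
    -- P2 (translation invariance)
    (hP2 : ∀ (X : Finset (Pt d)) (x : Pt d), zeta (X.image fun y => x + y) = zeta X)
    (c1 c2 : ℝ) (hc1 : 0 ≤ c1) (hc2 : 0 ≤ c2)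
    -- P3 (almost subadditivity)
    (hP3 : ∀ Y Z : Finset (Pt d), Disjoint Y Z → zeta (Y ∪ Z) ≤ zeta Y + zeta Z + c1)
    -- P4 (superadditivity up to boundary)
    (hP4 : ∀ Y Z : Finset (Pt d), Disjoint Y Z →
      zeta Y + zeta Z - c2 * (bdry d Y Z : ℝ) ≤ zeta (Y ∪ Z))
    (hzo : 0 < zeta {0})
    (ρ : ℝ → ℝ)
    (hρ : ∀ lam : ℝ, 0 < lam →
      Tendsto (fun s : ℝ => poissonExp d zeta lam s / (lam * s ^ d)) atTop
        (nhds (ρ lam))) :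
    ∀ lam lam' : ℝ, 0 < lam → lam < lam' →
      lam' * (c2 * (volume (Metric.closedBall (0 : Pt d) 1)).toReal) < zeta {0} →
      lam * ρ lam < lam' * ρ lam' := by
  intro lam lam' hlam hll hsmall
  have hlam' : 0 < lam' := lt_trans hlam hll
  set b := (volume (Metric.closedBall (0 : Pt d) 1)).toReal with hb
  have hb0 : 0 ≤ b := ENNReal.toReal_nonneg
  have hC0 : (0:ℝ) ≤ zeta {0} + c1 := add_nonneg (hzetann _) hc1
  have hgap : ∀ s : ℝ, 0 < s →
      (zeta {0} - c2 * b * lam') * ((lam' - lam) * s^d) + poissonExp d zeta lam s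
        ≤ poissonExp d zeta lam' s := by
    intro s hs
    have hsd : (0:ℝ) < s^d := pow_pos hs d
    haveI := unifCube_prob d hs
    set I : ℕ → ℝ := fun k => ∫ y : Fin k → Pt d, zeta (Finset.image y Finset.univ)
      ∂(Measure.pi fun _ => unifCube d s) with hIdef
    have h0 : ∀ n : ℕ, 0 ≤ I n := fun n => integral_nonneg fun y => hzetann _
    have hle : ∀ n : ℕ, I n ≤ n * (zeta {0} + c1) := by
      intro n
      have hb2 : ∀ y : Fin n → Pt d,
          ‖zeta (Finset.image y Finset.univ)‖ ≤ n * (zeta {0} + c1) := by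
        intro y
        rw [Real.norm_eq_abs, abs_of_nonneg (hzetann _)]
        refine le_trans (zeta_growth zeta hzeta0 hP2 hP3 _)
          (mul_le_mul_of_nonneg_right ?_ hC0)
        exact_mod_cast le_trans Finset.card_image_le (by simp)
      have hni := norm_integral_le_of_norm_le_const
        (μ := Measure.pi fun _ : Fin n => unifCube d s)
        (C := n * (zeta {0} + c1)) (Filter.Eventually.of_forall hb2)
      simp only [measure_univ, probReal_univ, ENNReal.toReal_one, mul_one] at hni
      exact le_trans (le_abs_self _) hni
    have hkey : ∀ n : ℕ, I n + zeta {0} - (c2 * (b / s^d)) * n ≤ I (n+1) := by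
      intro n
      have hk := key_integral zeta hd hzeta0 hzetann hP1 hP2 hc1 hc2 hP3 hP4 hs n
      have heq : (c2 * (b / s^d)) * (n:ℝ) = c2 * n * (b / s^d) := by ring
      rw [heq]
      exact hk
    have hβ : 0 ≤ c2 * (b / s^d) := mul_nonneg hc2 (div_nonneg hb0 hsd.le)
    have hμ : 0 < lam * s^d := mul_pos hlam hsd
    have hμμ' : lam * s^d < lam' * s^d := mul_lt_mul_of_pos_right hll hsd
    have hser := poisson_series_gap hC0 hβ h0 hle hkey hμ hμμ'
    have hz : zeta {0} - (c2 * (b / s^d)) * (lam' * s^d) = zeta {0} - c2 * b * lam' := by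
      field_simp
    have hm : (lam' * s^d) - (lam * s^d) = (lam' - lam) * s^d := by ring
    rw [hz, hm] at hser
    exact hser
  have hδ : 0 < zeta {0} - c2 * b * lam' := by
    have h : c2 * b * lam' = lam' * (c2 * b) := by ring
    rw [h]
    linarith
  have hT : Tendsto (fun s : ℝ => poissonExp d zeta lam s / s^d) atTop
      (nhds (lam * ρ lam)) := by
    refine Tendsto.congr' ?_ ((hρ lam hlam).const_mul lam)
    filter_upwards [eventually_gt_atTop 0] with s hs
    have hsd : (0:ℝ) < s^d := pow_pos hs d
    field_simp
  have hT' : Tendsto (fun s : ℝ => poissonExp d zeta lam' s / s^d) atTop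
      (nhds (lam' * ρ lam')) := by
    refine Tendsto.congr' ?_ ((hρ lam' hlam').const_mul lam')
    filter_upwards [eventually_gt_atTop 0] with s hs
    have hsd : (0:ℝ) < s^d := pow_pos hs d
    field_simp
  have hineq : (zeta {0} - c2 * b * lam') * (lam' - lam)
      ≤ lam' * ρ lam' - lam * ρ lam := by
    refine ge_of_tendsto (hT'.sub hT) ?_
    filter_upwards [eventually_gt_atTop 0] with s hs
    have hsd : (0:ℝ) < s^d := pow_pos hs d
    have h := hgap s hs
    have h2 := div_le_div_of_nonneg_right h hsd.le
    rw [add_div] at h2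
    have h3 : (zeta {0} - c2 * b * lam') * ((lam' - lam) * s^d) / s^d
        = (zeta {0} - c2 * b * lam') * (lam' - lam) := by
      field_simp
    rw [h3] at h2
    linarith
  have hpos : 0 < (zeta {0} - c2 * b * lam') * (lam' - lam) :=
    mul_pos hδ (sub_pos.2 hll)
  linarith
end
end

section
/- Suppose ζ satisfies Properties P1–P4 and P5′. Then the limit ζ̄ := lim_{s→∞} s^{-d}·ζ*(Q_s) exists in [0,∞), where ζ*(A) := sup{ζ(𝒳) : 𝒳 ⊆ A finite}. Moreover, for every λ > 0, λ·ρ(λ) ≤ ζ̄, where ρ(λ) := lim_{s→∞} E[ζ(H_{λ,s})]/(λ s^d) (this limit exists under P1–P4). -/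
open MeasureTheory ProbabilityTheory Filter Set Metric Bornology
open scoped Classical ENNReal NNReal symmDiff

noncomputable section

lemma zeta_partition_bound {d : ℕ} (zeta : Finset (Pt d) → ℝ) (hzeta0 : zeta ∅ = 0)
    (c1 : ℝ)
    (hP3 : ∀ Y Z : Finset (Pt d), Disjoint Y Z → zeta (Y ∪ Z) ≤ zeta Y + zeta Z + c1)
    {ι : Type} [DecidableEq ι] (c : Pt d → ι) (T : Finset ι) :
    ∀ X : Finset (Pt d), (∀ x ∈ X, c x ∈ T) →
      zeta X ≤ (∑ v ∈ T, zeta (X.filter fun x => c x = v)) + c1 * T.card := by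
  induction T using Finset.induction_on with
  | empty =>
    intro X hX
    have : X = ∅ := Finset.eq_empty_of_forall_notMem fun x hx => by simpa using hX x hx
    simp [this, hzeta0]
  | insert _ _ ha ih =>
    rename_i a T'
    intro X hX
    set X1 := X.filter fun x => c x = a with hX1
    set X2 := X.filter fun x => ¬ c x = a with hX2
    have hdisj : Disjoint X1 X2 := Finset.disjoint_filter_filter_not X X _
    have hunion : X1 ∪ X2 = X := Finset.filter_union_filter_not_eq _ X
    have h3 := hP3 X1 X2 hdisj
    rw [hunion] at h3
    have hX2T : ∀ x ∈ X2, c x ∈ T' := by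
      intro x hx
      rcases Finset.mem_filter.mp hx with ⟨hxX, hne⟩
      rcases Finset.mem_insert.mp (hX x hxX) with h | h
      · exact absurd h hne
      · exact h
    have ih2 := ih X2 hX2T
    have hfilter : ∀ v ∈ T', X2.filter (fun x => c x = v) = X.filter (fun x => c x = v) := by
      intro v hv
      ext x
      simp only [hX2, Finset.mem_filter]
      constructor
      · rintro ⟨⟨hxX, -⟩, hcv⟩; exact ⟨hxX, hcv⟩
      · rintro ⟨hxX, hcv⟩
        refine ⟨⟨hxX, ?_⟩, hcv⟩
        rintro rfl
        exact ha (hcv ▸ hv)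
    rw [Finset.sum_congr rfl (fun v hv => congrArg zeta (hfilter v hv))] at ih2
    rw [Finset.sum_insert ha, Finset.card_insert_of_notMem ha]
    push_cast
    linarith

lemma zeta_ball_bound {d : ℕ} (zeta : Finset (Pt d) → ℝ)
    (hP2 : ∀ (X : Finset (Pt d)) (x : Pt d), zeta (X.image fun y => x + y) = zeta X)
    {M : ℝ} (hM : ∀ X : Finset (Pt d), (X : Set (Pt d)) ⊆ Metric.closedBall 0 (1 / 2) → zeta X ≤ M)
    (x₀ : Pt d) (X : Finset (Pt d)) (hX : (X : Set (Pt d)) ⊆ Metric.closedBall x₀ (1 / 2)) :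
    zeta X ≤ M := by
  rw [← hP2 X (-x₀)]
  apply hM
  intro z hz
  simp only [Finset.coe_image, Set.mem_image, Finset.mem_coe] at hz
  obtain ⟨y, hy, rfl⟩ := hz
  have := hX hy
  simp only [Metric.mem_closedBall] at this ⊢
  rw [dist_eq_norm] at this ⊢
  simpa [neg_add_eq_sub, sub_zero] using this

lemma zeta_cube_bound {d : ℕ} (hd : 1 ≤ d) (zeta : Finset (Pt d) → ℝ) (hzeta0 : zeta ∅ = 0)
    (c1 : ℝ)
    (hP2 : ∀ (X : Finset (Pt d)) (x : Pt d), zeta (X.image fun y => x + y) = zeta X)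
    (hP3 : ∀ Y Z : Finset (Pt d), Disjoint Y Z → zeta (Y ∪ Z) ≤ zeta Y + zeta Z + c1)
    {M : ℝ} (hM : ∀ X : Finset (Pt d), (X : Set (Pt d)) ⊆ Metric.closedBall 0 (1 / 2) → zeta X ≤ M)
    (s : ℝ) :
    ∃ B : ℝ, ∀ X : Finset (Pt d), (X : Set (Pt d)) ⊆ cube d s → zeta X ≤ B := by
  have hd0 : (0:ℝ) < d := by exact_mod_cast hd
  set c : Pt d → (Fin d → ℤ) := fun x i => ⌊(d:ℝ) * x i⌋ with hc
  set T : Finset (Fin d → ℤ) :=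
    Fintype.piFinset fun _ => Finset.Icc ⌊-((d:ℝ) * s / 2)⌋ ⌈(d:ℝ) * s / 2⌉ with hT
  refine ⟨(∑ _v ∈ T, M) + c1 * T.card, ?_⟩
  intro X hX
  have hXT : ∀ x ∈ X, c x ∈ T := by
    intro x hx
    rw [hT, Fintype.mem_piFinset]
    intro i
    have hxi := hX hx i
    rw [Set.mem_Ico] at hxi
    rw [Finset.mem_Icc]
    constructor
    · apply Int.floor_le_floor
      nlinarith [hxi.1]
    · have h1 : ((⌊(d:ℝ) * x i⌋ : ℝ)) ≤ (⌈(d:ℝ) * s / 2⌉ : ℝ) :=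
        (Int.floor_le _).trans ((by nlinarith [hxi.2] : (d:ℝ) * x i ≤ (d:ℝ) * s / 2).trans
          (Int.le_ceil _))
      exact_mod_cast h1
  have key := zeta_partition_bound zeta hzeta0 c1 hP3 c T X hXT
  refine key.trans ?_
  gcongr with v hv
  -- each fiber is in a ball of radius 1/2
  set x₀ : Pt d := (WithLp.equiv 2 (Fin d → ℝ)).symm (fun i => ((v i : ℝ) + 1/2) / d) with hx₀
  apply zeta_ball_bound zeta hP2 hM x₀
  intro x hx
  rw [Finset.mem_coe, Finset.mem_filter] at hx
  obtain ⟨-, hcx⟩ := hx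
  rw [Metric.mem_closedBall, EuclideanSpace.dist_eq]
  have hcoord : ∀ i, dist (x i) (x₀ i) ^ 2 ≤ (1 / (2 * (d:ℝ))) ^ 2 := by
    intro i
    have hvi : v i = ⌊(d:ℝ) * x i⌋ := by rw [← hcx]
    rw [hx₀, WithLp.equiv_symm_apply, PiLp.toLp_apply]
    have h1 : ((⌊(d:ℝ) * x i⌋ : ℝ)) ≤ (d:ℝ) * x i := Int.floor_le _
    have h2 : (d:ℝ) * x i < (⌊(d:ℝ) * x i⌋ : ℝ) + 1 := Int.lt_floor_add_one _
    have e : x i - (((⌊(d:ℝ) * x i⌋ : ℝ)) + 1/2) / d = ((d:ℝ) * x i - ((⌊(d:ℝ) * x i⌋ : ℝ) + 1/2)) / d := by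
      field_simp
    have habs : |(d:ℝ) * x i - ((⌊(d:ℝ) * x i⌋ : ℝ) + 1/2)| ≤ 1/2 :=
      abs_le.mpr ⟨by linarith, by linarith⟩
    have hd1 : dist (x i) ((((v i : ℝ)) + 1/2) / d) ≤ 1 / (2 * (d:ℝ)) := by
      rw [Real.dist_eq, hvi]
      push_cast
      rw [e, abs_div, abs_of_pos hd0]
      calc |(d:ℝ) * x i - ((⌊(d:ℝ) * x i⌋ : ℝ) + 1/2)| / d ≤ (1/2) / d := by gcongr
        _ = 1 / (2 * d) := by ring
    exact pow_le_pow_left₀ dist_nonneg hd1 2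
  have hsum : ∑ i, dist (x i) (x₀ i) ^ 2 ≤ (1/4 : ℝ) := by
    have hs1 : ∑ i, dist (x i) (x₀ i) ^ 2 ≤ ∑ _i : Fin d, (1 / (2 * (d:ℝ))) ^ 2 :=
      Finset.sum_le_sum fun i _ => hcoord i
    have hs2 : ∑ _i : Fin d, (1 / (2 * (d:ℝ))) ^ 2 = d * (1 / (2 * (d:ℝ))) ^ 2 := by
      rw [Finset.sum_const, Finset.card_univ, Fintype.card_fin, nsmul_eq_mul]
    have hs3 : (d:ℝ) * (1 / (2 * (d:ℝ))) ^ 2 ≤ 1/4 := by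
      rw [show (d:ℝ) * (1 / (2 * (d:ℝ))) ^ 2 = 1 / (4 * d) by field_simp; ring]
      have hd1' : (1:ℝ) ≤ d := by exact_mod_cast hd
      rw [div_le_div_iff₀ (by positivity) (by norm_num)]
      nlinarith
    linarith [hs1, hs2 ▸ hs1, hs3, hs2]
  refine le_trans (Real.sqrt_le_sqrt hsum) ?_
  rw [show (1/4 : ℝ) = (1/2)^2 by norm_num, Real.sqrt_sq (by norm_num)]

lemma zeta_subcube_bound {d : ℕ} (zeta : Finset (Pt d) → ℝ) (hzeta0 : zeta ∅ = 0)
    (c1 : ℝ)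
    (hP2 : ∀ (X : Finset (Pt d)) (x : Pt d), zeta (X.image fun y => x + y) = zeta X)
    (hP3 : ∀ Y Z : Finset (Pt d), Disjoint Y Z → zeta (Y ∪ Z) ≤ zeta Y + zeta Z + c1)
    (m : ℕ) (hm : 1 ≤ m) (s : ℝ) (hs : 0 < s) (Fs : ℝ)
    (hFs : ∀ X : Finset (Pt d), (X : Set (Pt d)) ⊆ cube d s → zeta X ≤ Fs)
    (X : Finset (Pt d)) (hX : (X : Set (Pt d)) ⊆ cube d ((m : ℝ) * s)) :
    zeta X ≤ (m : ℝ) ^ d * (Fs + c1) := by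
  set c : Pt d → (Fin d → ℤ) := fun x i => ⌊(x i + (m : ℝ) * s / 2) / s⌋ with hc
  set T : Finset (Fin d → ℤ) := Fintype.piFinset fun _ => Finset.Icc 0 ((m : ℤ) - 1) with hT
  have hcard : (T.card : ℝ) = (m : ℝ) ^ d := by
    rw [hT, Fintype.card_piFinset]
    simp [Int.card_Icc]
  have hXT : ∀ x ∈ X, c x ∈ T := by
    intro x hx
    rw [hT, Fintype.mem_piFinset]
    intro i
    have hxi := hX hx i
    rw [Set.mem_Ico] at hxi
    rw [Finset.mem_Icc]
    constructor
    · apply Int.floor_nonneg.mpr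
      apply div_nonneg _ hs.le
      linarith [hxi.1]
    · have : ⌊(x i + (m : ℝ) * s / 2) / s⌋ < (m : ℤ) := by
        apply Int.floor_lt.mpr
        rw [div_lt_iff₀ hs]
        push_cast
        linarith [hxi.2]
      have hcxi : c x i = ⌊(x i + (m : ℝ) * s / 2) / s⌋ := rfl
      omega
  have key := zeta_partition_bound zeta hzeta0 c1 hP3 c T X hXT
  have hfib : ∀ v ∈ T, zeta (X.filter fun x => c x = v) ≤ Fs := by
    intro v _
    set t : Pt d := (WithLp.equiv 2 (Fin d → ℝ)).symm
      (fun i => -(((v i : ℝ)) * s - (m : ℝ) * s / 2 + s / 2)) with ht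
    rw [← hP2 _ t]
    apply hFs
    intro z hz
    simp only [Finset.coe_image, Set.mem_image, Finset.mem_coe] at hz
    obtain ⟨y, hy, rfl⟩ := hz
    rw [Finset.mem_filter] at hy
    obtain ⟨-, hcy⟩ := hy
    intro i
    have hvi : (v i : ℤ) = ⌊(y i + (m : ℝ) * s / 2) / s⌋ := by rw [← hcy]
    have h1 : ((v i : ℝ)) ≤ (y i + (m : ℝ) * s / 2) / s := by
      rw [hvi]; exact Int.floor_le _
    have h2 : (y i + (m : ℝ) * s / 2) / s < (v i : ℝ) + 1 := by
      rw [hvi]; exact Int.lt_floor_add_one _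
    rw [le_div_iff₀ hs] at h1
    rw [div_lt_iff₀ hs] at h2
    have hadd : (t + y) i = t i + y i := rfl
    rw [hadd, ht, WithLp.equiv_symm_apply, PiLp.toLp_apply]
    constructor
    · linarith
    · linarith
  calc zeta X ≤ (∑ v ∈ T, zeta (X.filter fun x => c x = v)) + c1 * T.card := key
    _ ≤ (∑ _v ∈ T, Fs) + c1 * T.card := by
        gcongr with v hv
        exact hfib v hv
    _ = (T.card : ℝ) * (Fs + c1) := by rw [Finset.sum_const, nsmul_eq_mul]; ring
    _ = (m : ℝ) ^ d * (Fs + c1) := by rw [hcard]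
lemma cube_measurableSet (d : ℕ) (s : ℝ) : MeasurableSet (cube d s) := by
  have : cube d s = ⋂ i, (fun x : Pt d => x i) ⁻¹' Set.Ico (-(s / 2)) (s / 2) := by
    ext x; simp [cube]
  rw [this]
  exact MeasurableSet.iInter fun i =>
    (measurable_pi_apply i).comp (WithLp.measurable_ofLp 2 _) measurableSet_Ico

lemma cube_volume_pos (d : ℕ) (s : ℝ) (hs : 0 < s) : 0 < volume (cube d s) := by
  have hU : IsOpen {x : Pt d | ∀ i, x i ∈ Set.Ioo (-(s / 2)) (s / 2)} := by
    have : {x : Pt d | ∀ i, x i ∈ Set.Ioo (-(s / 2)) (s / 2)} =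
        ⋂ i, (fun x : Pt d => x i) ⁻¹' Set.Ioo (-(s / 2)) (s / 2) := by
      ext x; simp
    rw [this]
    exact isOpen_iInter_of_finite fun i => ((continuous_apply i).comp (PiLp.continuous_ofLp 2 _)).isOpen_preimage _ isOpen_Ioo
  have hne : (0 : Pt d) ∈ {x : Pt d | ∀ i, x i ∈ Set.Ioo (-(s / 2)) (s / 2)} := by
    intro i
    have : (0 : Pt d) i = 0 := rfl
    rw [this]
    constructor <;> [linarith; linarith]
  have hsub : {x : Pt d | ∀ i, x i ∈ Set.Ioo (-(s / 2)) (s / 2)} ⊆ cube d s := by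
    intro x hx i
    exact Set.mem_Ico.mpr ⟨(hx i).1.le, (hx i).2⟩
  calc (0 : ℝ≥0∞) < volume {x : Pt d | ∀ i, x i ∈ Set.Ioo (-(s / 2)) (s / 2)} :=
        hU.measure_pos volume ⟨0, hne⟩
    _ ≤ volume (cube d s) := measure_mono hsub

lemma cube_volume_lt_top (d : ℕ) (s : ℝ) : volume (cube d s) < ⊤ := by
  apply Bornology.IsBounded.measure_lt_top
  apply (Metric.isBounded_closedBall (x := (0 : Pt d))
    (r := Real.sqrt (d * (s / 2) ^ 2))).subset
  intro x hx
  rw [Metric.mem_closedBall, EuclideanSpace.dist_eq]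
  apply Real.sqrt_le_sqrt
  have : ∀ i, dist (x i) ((0 : Pt d) i) ^ 2 ≤ (s / 2) ^ 2 := by
    intro i
    have h0 : (0 : Pt d) i = 0 := rfl
    rw [h0, Real.dist_eq, sub_zero, sq_abs]
    have := hx i
    rw [Set.mem_Ico] at this
    nlinarith [this.1, this.2]
  calc ∑ i, dist (x i) ((0 : Pt d) i) ^ 2 ≤ ∑ _i : Fin d, (s / 2) ^ 2 :=
        Finset.sum_le_sum fun i _ => this i
    _ = d * (s / 2) ^ 2 := by
        rw [Finset.sum_const, Finset.card_univ, Fintype.card_fin, nsmul_eq_mul]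

lemma unifCube_isProbability (d : ℕ) (s : ℝ) (hs : 0 < s) :
    IsProbabilityMeasure (unifCube d s) := by
  constructor
  rw [unifCube, Measure.smul_apply, Measure.restrict_apply_univ, smul_eq_mul]
  exact ENNReal.inv_mul_cancel (cube_volume_pos d s hs).ne' (cube_volume_lt_top d s).ne

lemma poissonExp_le_bound {d : ℕ} (zeta : Finset (Pt d) → ℝ) (hzetann : ∀ X, 0 ≤ zeta X)
    (hP1 : ∀ k : ℕ, Measurable fun y : Fin k → Pt d => zeta (Finset.image y Finset.univ))
    (lam s : ℝ) (hlam : 0 < lam) (hs : 0 < s) (Fs : ℝ)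
    (hFs : ∀ X : Finset (Pt d), (X : Set (Pt d)) ⊆ cube d s → zeta X ≤ Fs) :
    poissonExp d zeta lam s ≤ Fs := by
  haveI hprob : IsProbabilityMeasure (unifCube d s) := unifCube_isProbability d s hs
  set μ := lam * s ^ d with hμdef
  have hμ : 0 < μ := by positivity
  have hunifC : unifCube d s (cube d s) = 1 := by
    rw [unifCube, Measure.smul_apply, Measure.restrict_apply (cube_measurableSet d s),
      Set.inter_self, smul_eq_mul]
    exact ENNReal.inv_mul_cancel (cube_volume_pos d s hs).ne' (cube_volume_lt_top d s).ne
  -- per-k bound on the integral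
  have hI : ∀ k : ℕ,
      (0 ≤ ∫ y : Fin k → Pt d, zeta (Finset.image y Finset.univ)
          ∂(Measure.pi fun _ => unifCube d s)) ∧
      (∫ y : Fin k → Pt d, zeta (Finset.image y Finset.univ)
          ∂(Measure.pi fun _ => unifCube d s)) ≤ Fs := by
    intro k
    set π : Measure (Fin k → Pt d) := Measure.pi fun _ => unifCube d s with hπ
    haveI : IsProbabilityMeasure π := by rw [hπ]; infer_instance
    have hae : ∀ᵐ y : Fin k → Pt d ∂π, ∀ i, y i ∈ cube d s := by
      have hE : π (Set.pi Set.univ fun _ : Fin k => cube d s) = 1 := by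
        rw [hπ, Measure.pi_pi]
        simp [hunifC]
      have := measure_compl (MeasurableSet.univ_pi fun _ => cube_measurableSet d s)
        (by simp : π (Set.pi Set.univ fun _ : Fin k => cube d s) ≠ ⊤)
      rw [hE, measure_univ] at this
      rw [ae_iff]
      have hset : {y : Fin k → Pt d | ¬ ∀ i, y i ∈ cube d s} =
          (Set.pi Set.univ fun _ : Fin k => cube d s)ᶜ := by
        ext y; simp [Set.mem_pi]
      rw [hset, this, tsub_self]
    have haele : ∀ᵐ y : Fin k → Pt d ∂π, zeta (Finset.image y Finset.univ) ≤ Fs := by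
      filter_upwards [hae] with y hy
      apply hFs
      intro z hz
      simp only [Finset.coe_image, Set.mem_image, Finset.mem_coe, Finset.mem_univ] at hz
      obtain ⟨i, -, rfl⟩ := hz
      exact hy i
    have hint : Integrable (fun y : Fin k → Pt d => zeta (Finset.image y Finset.univ)) π := by
      apply Integrable.mono' (integrable_const Fs) (hP1 k).aestronglyMeasurable
      filter_upwards [haele] with y hy
      rw [Real.norm_eq_abs, abs_of_nonneg (hzetann _)]
      exact hy
    refine ⟨integral_nonneg fun y => hzetann _, ?_⟩
    calc (∫ y : Fin k → Pt d, zeta (Finset.image y Finset.univ) ∂π)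
        ≤ ∫ _y : Fin k → Pt d, Fs ∂π := integral_mono_ae hint (integrable_const Fs) haele
      _ = Fs := by simp
  -- sum up
  have hp : ∀ k : ℕ, 0 ≤ Real.exp (-μ) * μ ^ k / (Nat.factorial k : ℝ) := by
    intro k; positivity
  have hg : Summable (fun k : ℕ => (Real.exp (-μ) * μ ^ k / (Nat.factorial k : ℝ)) * Fs) := by
    have : (fun k : ℕ => (Real.exp (-μ) * μ ^ k / (Nat.factorial k : ℝ)) * Fs) =
        fun k : ℕ => (Real.exp (-μ)) * ((μ ^ k / (Nat.factorial k : ℝ)) * Fs) := by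
      funext k; ring
    rw [this]
    exact (((Real.summable_pow_div_factorial μ).mul_right Fs).mul_left _)
  have hf : Summable (fun k : ℕ => (Real.exp (-μ) * μ ^ k / (Nat.factorial k : ℝ)) *
      ∫ y : Fin k → Pt d, zeta (Finset.image y Finset.univ)
        ∂(Measure.pi fun _ => unifCube d s)) := by
    apply Summable.of_nonneg_of_le
      (fun k => mul_nonneg (hp k) (hI k).1)
      (fun k => mul_le_mul_of_nonneg_left (hI k).2 (hp k)) hg
  have hsum1 : ∑' k : ℕ, (Real.exp (-μ) * μ ^ k / (Nat.factorial k : ℝ)) * Fs = Fs := by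
    have h1 : (fun k : ℕ => (Real.exp (-μ) * μ ^ k / (Nat.factorial k : ℝ)) * Fs) =
        fun k : ℕ => (Real.exp (-μ) * Fs) * (μ ^ k / (Nat.factorial k : ℝ)) := by
      funext k; ring
    rw [h1, tsum_mul_left]
    have h2 : ∑' k : ℕ, μ ^ k / (Nat.factorial k : ℝ) = Real.exp μ := by
      rw [Real.exp_eq_exp_ℝ, NormedSpace.exp_eq_tsum_div]
    rw [h2, mul_comm (Real.exp (-μ)) Fs, mul_assoc, ← Real.exp_add]
    simp
  calc poissonExp d zeta lam s
      ≤ ∑' k : ℕ, (Real.exp (-μ) * μ ^ k / (Nat.factorial k : ℝ)) * Fs := by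
        rw [poissonExp]
        exact Summable.tsum_le_tsum (fun k => mul_le_mul_of_nonneg_left (hI k).2 (hp k)) hf hg
    _ = Fs := hsum1

/-- under P1–P4 and P5′, the limit `ζ̄ = lim s^{-d} ζ*(Q_s)` exists in `[0,∞)`
and `λ·ρ(λ) ≤ ζ̄` for every `λ > 0`. -/
theorem zetaStar_limit_exists_and_bounds {d : ℕ} (hd : 1 ≤ d)
    (zeta : Finset (Pt d) → ℝ) (hzeta0 : zeta ∅ = 0) (hzetann : ∀ X, 0 ≤ zeta X)
    -- P1 (measurability)
    (hP1 : ∀ k : ℕ, Measurable fun y : Fin k → Pt d => zeta (Finset.image y Finset.univ))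
    -- P2 (translation invariance)
    (hP2 : ∀ (X : Finset (Pt d)) (x : Pt d), zeta (X.image fun y => x + y) = zeta X)
    (c1 c2 : ℝ) (hc1 : 0 ≤ c1) (hc2 : 0 ≤ c2)
    -- P3 (almost subadditivity)
    (hP3 : ∀ Y Z : Finset (Pt d), Disjoint Y Z → zeta (Y ∪ Z) ≤ zeta Y + zeta Z + c1)
    -- P4 (superadditivity up to boundary)
    (hP4 : ∀ Y Z : Finset (Pt d), Disjoint Y Z →
      zeta Y + zeta Z - c2 * (bdry d Y Z : ℝ) ≤ zeta (Y ∪ Z))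
    -- P5′ (local uniform boundedness)
    (hP5' : ∃ M : ℝ, ∀ X : Finset (Pt d),
      (X : Set (Pt d)) ⊆ Metric.closedBall 0 (1 / 2) → zeta X ≤ M) :
    ∃ zbar : ℝ, 0 ≤ zbar ∧
      Tendsto (fun s : ℝ => zetaStar d zeta (cube d s) / s ^ d) atTop (nhds zbar) ∧
      ∀ lam : ℝ, 0 < lam → ∀ R : ℝ,
        Tendsto (fun s : ℝ => poissonExp d zeta lam s / (lam * s ^ d)) atTop (nhds R) →
        lam * R ≤ zbar := by
  obtain ⟨M, hM⟩ := hP5'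
  set S : ℝ → Set ℝ :=
    fun s => {t | ∃ X : Finset (Pt d), (X : Set (Pt d)) ⊆ cube d s ∧ t = zeta X} with hSdef
  set F : ℝ → ℝ := fun s => zetaStar d zeta (cube d s) with hFdef
  have hS0 : ∀ s, (0 : ℝ) ∈ S s := fun s => ⟨∅, by simp, hzeta0.symm⟩
  have hbdd : ∀ s, BddAbove (S s) := by
    intro s
    obtain ⟨B, hB⟩ := zeta_cube_bound hd zeta hzeta0 c1 hP2 hP3 hM s
    exact ⟨B, by rintro t ⟨X, hX, rfl⟩; exact hB X hX⟩
  have hFS : ∀ s, F s = sSup (S s) := fun s => rfl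
  have hle : ∀ s, ∀ X : Finset (Pt d), (X : Set (Pt d)) ⊆ cube d s → zeta X ≤ F s :=
    fun s X hX => le_csSup (hbdd s) ⟨X, hX, rfl⟩
  have hF0 : ∀ s, 0 ≤ F s := fun s => le_csSup (hbdd s) (hS0 s)
  have hcubemono : ∀ s t : ℝ, s ≤ t → cube d s ⊆ cube d t := by
    intro s t hst x hx i
    have := hx i
    rw [Set.mem_Ico] at this ⊢
    constructor <;> [linarith [this.1]; linarith [this.2]]
  have hmono : ∀ s t : ℝ, s ≤ t → F s ≤ F t := by
    intro s t hst
    apply csSup_le_csSup (hbdd t) ⟨0, hS0 s⟩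
    rintro y ⟨X, hX, rfl⟩
    exact ⟨X, hX.trans (hcubemono s t hst), rfl⟩
  have hFsub : ∀ m : ℕ, 1 ≤ m → ∀ s : ℝ, 0 < s →
      F ((m : ℝ) * s) ≤ (m : ℝ) ^ d * (F s + c1) := by
    intro m hm s hs
    apply csSup_le ⟨0, hS0 _⟩
    rintro y ⟨X, hX, rfl⟩
    exact zeta_subcube_bound zeta hzeta0 c1 hP2 hP3 m hm s hs (F s) (hle s) X hX
  -- the limit candidate
  set E : Set ℝ := {y | ∃ s : ℝ, 0 < s ∧ y = (F s + c1) / s ^ d} with hEdef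
  have hEne : E.Nonempty := ⟨(F 1 + c1) / 1 ^ d, 1, one_pos, rfl⟩
  have hEbdd : BddBelow E := by
    refine ⟨0, ?_⟩
    rintro y ⟨s, hs, rfl⟩
    exact div_nonneg (by linarith [hF0 s]) (by positivity)
  set L : ℝ := sInf E with hLdef
  have hL0 : 0 ≤ L := le_csInf hEne (by
    rintro y ⟨s, hs, rfl⟩
    exact div_nonneg (by linarith [hF0 s]) (by positivity))
  have hLle : ∀ t : ℝ, 0 < t → L ≤ (F t + c1) / t ^ d := fun t ht =>
    csInf_le hEbdd ⟨t, ht, rfl⟩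
  have htendsto : Tendsto (fun t : ℝ => F t / t ^ d) atTop (nhds L) := by
    rw [Metric.tendsto_atTop]
    intro ε hε
    -- lower bound threshold
    have hlow : ∀ t : ℝ, max 1 (c1 / ε + 1) ≤ t → L - ε < F t / t ^ d := by
      intro t ht
      have ht1 : (1:ℝ) ≤ t := le_trans (le_max_left _ _) ht
      have ht0 : (0:ℝ) < t := by linarith
      have htd : t ≤ t ^ d := le_self_pow₀ ht1 (by omega)
      have htd0 : (0:ℝ) < t ^ d := by positivity
      have hc1t : c1 / t ^ d < ε := by
        rw [div_lt_iff₀ htd0]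
        have h2 : c1 / ε + 1 ≤ t := le_trans (le_max_right _ _) ht
        have h3 : c1 / ε + 1 ≤ t ^ d := le_trans h2 htd
        have h4 := mul_le_mul_of_nonneg_left h3 hε.le
        rw [mul_add, mul_one, mul_div_cancel₀ _ hε.ne'] at h4
        linarith
      have h5 := hLle t ht0
      rw [add_div] at h5
      linarith
    -- upper bound threshold
    obtain ⟨a, haE, halt⟩ := (csInf_lt_iff hEbdd hEne).mp
      (show sInf E < L + ε / 2 by rw [← hLdef]; linarith)
    obtain ⟨s, hs, rfl⟩ := haE
    have hA0 : 0 ≤ (F s + c1) / s ^ d :=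
      div_nonneg (by linarith [hF0 s]) (by positivity)
    set A : ℝ := (F s + c1) / s ^ d with hAdef
    have hulim : Tendsto (fun t : ℝ => (1 + 1 / (t / s - 1)) ^ d * A) atTop (nhds A) := by
      have h1 : Tendsto (fun t : ℝ => t / s - 1) atTop atTop :=
        (tendsto_id.atTop_div_const hs).atTop_add tendsto_const_nhds
      have h2 : Tendsto (fun t : ℝ => 1 / (t / s - 1)) atTop (nhds 0) := by
        simpa [one_div, Pi.inv_def] using h1.inv_tendsto_atTop
      have h3 : Tendsto (fun t : ℝ => (1 + 1 / (t / s - 1)) ^ d) atTop (nhds ((1 + 0) ^ d)) :=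
        (tendsto_const_nhds.add h2).pow d
      have h4 := h3.mul_const A
      simpa using h4
    have hult : ∀ᶠ t in (atTop : Filter ℝ), (1 + 1 / (t / s - 1)) ^ d * A < L + ε := by
      apply hulim.eventually_lt_const
      linarith
    obtain ⟨N2, hN2⟩ := (((eventually_ge_atTop (2 * s)).and (eventually_ge_atTop 1)).and
      hult).exists_forall_of_atTop
    refine ⟨max (max 1 (c1 / ε + 1)) N2, ?_⟩
    intro t ht
    have ht1 := le_trans (le_max_left _ _) ht
    have htN2 := le_trans (le_max_right _ _) ht
    obtain ⟨⟨ht2s, ht1'⟩, htu⟩ := hN2 t htN2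
    have ht0 : (0:ℝ) < t := by linarith
    -- upper bound
    set m : ℕ := ⌊t / s⌋₊ with hmdef
    have hts2 : (2:ℝ) ≤ t / s := (le_div_iff₀ hs).mpr (by linarith)
    have hm2 : 2 ≤ m := Nat.le_floor (by exact_mod_cast hts2)
    have hmle : (m : ℝ) ≤ t / s := Nat.floor_le (by positivity)
    have hmlt : t / s < (m : ℝ) + 1 := Nat.lt_floor_add_one _
    have hmst : (m : ℝ) * s ≤ t := by
      rw [← le_div_iff₀ hs]; linarith
    have htm1s : t ≤ ((m : ℕ) + 1 : ℝ) * s := by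
      rw [← div_le_iff₀ hs]; push_cast; linarith
    have hm0 : (0:ℝ) < (m : ℝ) := by exact_mod_cast Nat.lt_of_lt_of_le (by norm_num) hm2
    have hFt : F t ≤ ((m : ℝ) + 1) ^ d * (F s + c1) := by
      have h6 := hFsub (m + 1) (by omega) s hs
      push_cast at h6
      exact le_trans (hmono t _ htm1s) (by push_cast; exact h6)
    have hgt : F t / t ^ d ≤ (1 + 1 / (t / s - 1)) ^ d * A := by
      have hms0 : (0:ℝ) < ((m:ℝ) * s) ^ d := by positivity
      have step1 : F t / t ^ d ≤ F t / ((m:ℝ) * s) ^ d := by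
        apply div_le_div_of_nonneg_left (hF0 t) hms0
        exact pow_le_pow_left₀ (by positivity) hmst d
      have step2 : F t / ((m:ℝ) * s) ^ d ≤ ((m : ℝ) + 1) ^ d * (F s + c1) / ((m:ℝ) * s) ^ d := by
        gcongr
      have step3 : ((m : ℝ) + 1) ^ d * (F s + c1) / ((m:ℝ) * s) ^ d
          = (((m:ℝ) + 1) / m) ^ d * A := by
        have hmd : ((m:ℝ)) ^ d ≠ 0 := by positivity
        have hsd : s ^ d ≠ 0 := by positivity
        rw [hAdef, div_pow, mul_pow]
        field_simp
      have step4 : (((m:ℝ) + 1) / m) ^ d ≤ (1 + 1 / (t / s - 1)) ^ d := by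
        apply pow_le_pow_left₀ (by positivity)
        have hts1 : (0:ℝ) < t / s - 1 := by linarith
        have : 1 / (m : ℝ) ≤ 1 / (t / s - 1) :=
          one_div_le_one_div_of_le hts1 (by linarith)
        have hrw : ((m:ℝ) + 1) / m = 1 + 1 / m := by field_simp
        rw [hrw]
        linarith
      calc F t / t ^ d ≤ ((m : ℝ) + 1) ^ d * (F s + c1) / ((m:ℝ) * s) ^ d :=
            le_trans step1 step2
        _ = (((m:ℝ) + 1) / m) ^ d * A := step3
        _ ≤ (1 + 1 / (t / s - 1)) ^ d * A := mul_le_mul_of_nonneg_right step4 hA0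
    have hup : F t / t ^ d < L + ε := lt_of_le_of_lt hgt htu
    have hlo := hlow t ht1
    rw [Real.dist_eq, abs_lt]
    constructor <;> linarith
  refine ⟨L, hL0, htendsto, ?_⟩
  intro lam hlam R hR
  have hevle : ∀ᶠ t in (atTop : Filter ℝ),
      poissonExp d zeta lam t / (lam * t ^ d) ≤ (F t / t ^ d) / lam := by
    filter_upwards [eventually_gt_atTop (0:ℝ)] with t ht
    have hpe := poissonExp_le_bound zeta hzetann hP1 lam t hlam ht (F t) (hle t)
    have htd0 : (0:ℝ) < t ^ d := by positivity
    have h1 : poissonExp d zeta lam t / (lam * t ^ d) ≤ F t / (lam * t ^ d) := by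
      gcongr
    have h2 : F t / (lam * t ^ d) = (F t / t ^ d) / lam := by
      rw [div_div]
      ring_nf
    linarith [h1, h2 ▸ h1]
  have h3 : Tendsto (fun t : ℝ => (F t / t ^ d) / lam) atTop (nhds (L / lam)) :=
    htendsto.div_const lam
  have h4 : R ≤ L / lam := le_of_tendsto_of_tendsto hR h3 hevle
  rw [le_div_iff₀ hlam] at h4
  linarith

end
end
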